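/- Let G be a finite group and C₁, …, Cₙ cyclic subgroups of G. The induced characters (1_{C₁})^G, …, (1_{Cₙ})^G span the ℂ-subspace of class functions spanned by the rational-valued characters of G if and only if every conjugacy class of cyclic subgroups of G contains some Cᵢ. -/

import Mathlib

/-- The induced character `(1_C)^G` of the trivial character of a subgroup `C`. -/
noncomputable def indTriv (G : Type) [Group G] [Fintype G] (C : Subgroup G) : G → ℂ :=
  fun g => (Nat.card {x : G // x⁻¹ * g * x ∈ C} : ℂ) / (Nat.card C : ℂ)

/-- `χ : G → ℂ` is a character: the trace of a nonzero finite-dimensional complex rep. -/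
def IsCharacter (G : Type) [Group G] (χ : G → ℂ) : Prop :=
  ∃ V : FDRep ℂ G, χ = V.character ∧ χ ≠ 0

/-- `χ` is an irreducible character of `G`. -/
def IsIrredChar (G : Type) [Group G] (χ : G → ℂ) : Prop :=
  ∃ V : FDRep ℂ G, CategoryTheory.Simple V ∧ χ = V.character

/-- All values of `χ` are rational. -/
def IsRatValued {G : Type} (χ : G → ℂ) : Prop := ∀ g : G, ∃ q : ℚ, χ g = (q : ℂ)

/-- Subgroups `H` and `K` are conjugate in `G`. -/
def SubConj {G : Type} [Group G] (H K : Subgroup G) : Prop :=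
  ∃ g : G, Subgroup.map (MulAut.conj g).toMonoidHom H = K

/-- The ℂ-subspace of `G → ℂ` spanned by the rational valued characters of `G`. -/
noncomputable def ratCharSpan (G : Type) [Group G] : Submodule ℂ (G → ℂ) :=
  Submodule.span ℂ {χ : G → ℂ | IsCharacter G χ ∧ IsRatValued χ}

/-- The number of conjugacy classes of cyclic subgroups of `G`. -/
noncomputable def numCyclicClasses (G : Type) [Group G] : ℕ :=
  Nat.card (Quot (fun H K : {H : Subgroup G // IsCyclic ↥H} => SubConj H.1 K.1))

/-- Indicator function of the set of `g` with `⟨g⟩` conjugate to `⟨x⟩`. -/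
noncomputable def Phi (G : Type) [Group G] (x : G) : G → ℂ := fun g =>
  letI := Classical.propDecidable
  if SubConj (Subgroup.zpowers g) (Subgroup.zpowers x) then 1 else 0

/-- The cyclotomic field `ℚ(e^{2πi/n})` as a subfield of `ℂ`. -/
noncomputable def cycField (n : ℕ) : IntermediateField ℚ ℂ :=
  IntermediateField.adjoin ℚ ({Complex.exp (2 * Real.pi * Complex.I / n)} : Set ℂ)

/-- `ψ` is in the `Gal(ℚ(ζ_n)/ℚ)`-orbit of `χ` (acting on character values). -/
def galRel (G : Type) [Group G] (n : ℕ) (χ ψ : G → ℂ) : Prop :=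
  ∃ σ : cycField n ≃ₐ[ℚ] cycField n,
    ∀ g : G, ∃ h : χ g ∈ cycField n, (σ ⟨χ g, h⟩ : ℂ) = ψ g

/-- The field `ℚ(χ)` generated by the values of `χ`. -/
noncomputable def charField (G : Type) (χ : G → ℂ) : IntermediateField ℚ ℂ :=
  IntermediateField.adjoin ℚ (Set.range χ)

/-- The rationalization `χ^rat = ∑_{σ ∈ Gal(ℚ(χ)/ℚ)} χ^σ`. -/
noncomputable def ratzn (G : Type) [Group G] (χ : G → ℂ) : G → ℂ :=
  fun g => ∑ᶠ σ : charField G χ ≃ₐ[ℚ] charField G χ,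
    (σ ⟨χ g, IntermediateField.subset_adjoin ℚ _ ⟨g, rfl⟩⟩ : ℂ)

/-- The induced character of a character `φ` of a subgroup `H`. -/
noncomputable def inducedChar (G : Type) [Group G] [Fintype G] (H : Subgroup G)
    (φ : H → ℂ) : G → ℂ := fun g =>
  letI := Classical.propDecidable
  (Nat.card H : ℂ)⁻¹ * ∑ x : G, if h : x⁻¹ * g * x ∈ H then φ ⟨x⁻¹ * g * x, h⟩ else 0


section Part0
set_option linter.unusedSectionVars false
open Subgroup

variable {G : Type} [Group G]

lemma map_conj_map_conj (a b : G) (H : Subgroup G) :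
    Subgroup.map (MulAut.conj a).toMonoidHom (Subgroup.map (MulAut.conj b).toMonoidHom H)
      = Subgroup.map (MulAut.conj (a*b)).toMonoidHom H := by
  rw [Subgroup.map_map]
  congr 1
  ext x
  simp [mul_assoc]

lemma subConj_refl (H : Subgroup G) : SubConj H H :=
  ⟨1, by ext x; simp⟩

lemma subConj_symm {H K : Subgroup G} (h : SubConj H K) : SubConj K H := by
  obtain ⟨a, ha⟩ := h
  refine ⟨a⁻¹, ?_⟩
  rw [← ha, map_conj_map_conj]
  simp only [inv_mul_cancel, map_one]
  ext x; simp

lemma subConj_trans {H K L : Subgroup G} (h : SubConj H K) (h' : SubConj K L) : SubConj H L := by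
  obtain ⟨a, ha⟩ := h; obtain ⟨b, hb⟩ := h'
  exact ⟨b*a, by rw [← hb, ← ha, map_conj_map_conj]⟩

lemma conj_zpowers (a g : G) :
    Subgroup.map (MulAut.conj a).toMonoidHom (zpowers g) = zpowers (a * g * a⁻¹) := by
  rw [MonoidHom.map_zpowers]; rfl

/-- the relation on elements -/
def rel (g h : G) : Prop := SubConj (zpowers g) (zpowers h)

lemma rel_refl (g : G) : rel g g := subConj_refl _
lemma rel_symm {g h : G} (h1 : rel g h) : rel h g := subConj_symm h1
lemma rel_trans {g h k : G} (h1 : rel g h) (h2 : rel h k) : rel g k := subConj_trans h1 h2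


lemma mem_conj_map_iff {a z : G} {C : Subgroup G} :
    z ∈ Subgroup.map (MulAut.conj a).toMonoidHom C ↔ a⁻¹ * z * a ∈ C := by
  simp only [Subgroup.mem_map, MulEquiv.coe_toMonoidHom, MulAut.conj_apply]
  constructor
  · rintro ⟨y, hy, hz⟩
    have : a⁻¹ * z * a = y := by rw [← hz]; group
    rw [this]; exact hy
  · intro hm
    exact ⟨a⁻¹ * z * a, hm, by group⟩

variable [Fintype G]

lemma mem_iff_mem_of_zpowers_eq {a b : G} (h : zpowers a = zpowers b) {C : Subgroup G} :
    a ∈ C ↔ b ∈ C := by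
  constructor
  · intro ha
    exact (zpowers_le.mp (h ▸ zpowers_le.mpr ha))
  · intro hb
    exact (zpowers_le.mp (h.symm ▸ zpowers_le.mpr hb))

lemma zpowers_conj_elt (x g : G) : zpowers (x⁻¹ * g * x) =
    Subgroup.map (MulAut.conj x⁻¹).toMonoidHom (zpowers g) := by
  rw [conj_zpowers]; group

lemma card_numset_eq_of_rel (C : Subgroup G) {g h : G} (hr : rel g h) :
    Nat.card {x : G // x⁻¹ * g * x ∈ C} = Nat.card {x : G // x⁻¹ * h * x ∈ C} := by
  obtain ⟨a, ha⟩ := hr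
  rw [conj_zpowers] at ha
  apply Nat.card_congr
  refine Equiv.subtypeEquiv (Equiv.mulLeft a) ?_
  intro x
  show x⁻¹ * g * x ∈ C ↔ (a * x)⁻¹ * h * (a * x) ∈ C
  have : zpowers ((a*x)⁻¹ * h * (a*x)) = zpowers (x⁻¹ * g * x) := by
    rw [zpowers_conj_elt _ h, zpowers_conj_elt _ g, ← ha, ← conj_zpowers, map_conj_map_conj]
    congr 2
    simp [mul_assoc]
  exact (mem_iff_mem_of_zpowers_eq this).symm

lemma indTriv_rel_const (C : Subgroup G) {g h : G} (hr : rel g h) :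
    indTriv G C g = indTriv G C h := by
  unfold indTriv
  rw [card_numset_eq_of_rel C hr]

lemma indTriv_subConj_eq {C D : Subgroup G} (h : SubConj C D) :
    indTriv G C = indTriv G D := by
  obtain ⟨a, ha⟩ := h
  funext g
  unfold indTriv
  have hcard : Nat.card D = Nat.card C := by
    rw [← ha]
    exact (Nat.card_congr (Subgroup.equivMapOfInjective C _
      (MulAut.conj a).injective).toEquiv).symm
  have hnum : Nat.card {x : G // x⁻¹ * g * x ∈ D} = Nat.card {x : G // x⁻¹ * g * x ∈ C} := by
    apply Nat.card_congr
    refine Equiv.subtypeEquiv (Equiv.mulRight a) ?_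
    intro x
    show x⁻¹ * g * x ∈ D ↔ (x * a)⁻¹ * g * (x * a) ∈ C
    rw [← ha, mem_conj_map_iff]
    constructor
    · intro hm
      have : (x*a)⁻¹ * g * (x*a) = a⁻¹ * (x⁻¹ * g * x) * a := by group
      rw [this]; exact hm
    · intro hm
      have : a⁻¹ * (x⁻¹ * g * x) * a = (x*a)⁻¹ * g * (x*a) := by group
      rw [this]; exact hm
  rw [hcard, hnum]

lemma card_C_ne_zero (C : Subgroup G) : (Nat.card C : ℂ) ≠ 0 := by
  have : 0 < Nat.card C := Nat.card_pos
  exact_mod_cast this.ne'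

lemma indTriv_ne_zero_iff (C : Subgroup G) (g : G) :
    indTriv G C g ≠ 0 ↔ ∃ u : G, u⁻¹ * g * u ∈ C := by
  unfold indTriv
  rw [div_ne_zero_iff]
  constructor
  · rintro ⟨h1, -⟩
    have : Nat.card {x : G // x⁻¹ * g * x ∈ C} ≠ 0 := by exact_mod_cast h1
    have : Nonempty {x : G // x⁻¹ * g * x ∈ C} := Nat.card_ne_zero.mp this |>.1
    obtain ⟨⟨u, hu⟩⟩ := this
    exact ⟨u, hu⟩
  · rintro ⟨u, hu⟩
    refine ⟨?_, card_C_ne_zero C⟩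
    have : Nonempty {x : G // x⁻¹ * g * x ∈ C} := ⟨⟨u, hu⟩⟩
    have : 0 < Nat.card {x : G // x⁻¹ * g * x ∈ C} := Nat.card_pos
    exact_mod_cast this.ne'

lemma indTriv_self_ne_zero (x : G) : indTriv G (zpowers x) x ≠ 0 := by
  rw [indTriv_ne_zero_iff]
  exact ⟨1, by simpa using mem_zpowers x⟩

lemma card_le_of_conj_mem {C : Subgroup G} {g u : G} (hu : u⁻¹ * g * u ∈ C) :
    Nat.card (zpowers g) ≤ Nat.card C := by
  have h1 : zpowers (u⁻¹ * g * u) ≤ C := zpowers_le.mpr hu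
  have h2 : Nat.card (zpowers (u⁻¹ * g * u)) = Nat.card (zpowers g) := by
    rw [zpowers_conj_elt]
    exact (Nat.card_congr (Subgroup.equivMapOfInjective _ _
      (MulAut.conj u⁻¹).injective).toEquiv).symm
  rw [← h2]
  exact Subgroup.card_le_of_le h1

lemma subConj_of_conj_mem_card_eq {C : Subgroup G} {g u : G} (hu : u⁻¹ * g * u ∈ C)
    (hcard : Nat.card C ≤ Nat.card (zpowers g)) : SubConj (zpowers g) C := by
  have h1 : zpowers (u⁻¹ * g * u) ≤ C := zpowers_le.mpr hu
  have h2 : Nat.card (zpowers (u⁻¹ * g * u)) = Nat.card (zpowers g) := by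
    rw [zpowers_conj_elt]
    exact (Nat.card_congr (Subgroup.equivMapOfInjective _ _
      (MulAut.conj u⁻¹).injective).toEquiv).symm
  have : zpowers (u⁻¹ * g * u) = C :=
    Subgroup.eq_of_le_of_card_ge h1 (by omega)
  exact ⟨u⁻¹, by rw [conj_zpowers]; rw [show u⁻¹ * g * u⁻¹⁻¹ = u⁻¹ * g * u by group]; exact this⟩

attribute [local instance] Classical.propDecidable

lemma Phi_apply (x g : G) :
    Phi G x g = if rel g x then 1 else 0 := rfl

lemma Phi_apply_of_rel {x g : G} (h : rel g x) : Phi G x g = 1 := by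
  rw [Phi_apply]; exact if_pos h

lemma Phi_apply_of_not_rel {x g : G} (h : ¬ rel g x) : Phi G x g = 0 := by
  rw [Phi_apply]; exact if_neg h

lemma Phi_eq_of_rel {x y : G} (h : rel x y) : Phi G x = Phi G y := by
  funext g
  rw [Phi_apply, Phi_apply]
  by_cases hg : rel g x
  · rw [if_pos hg, if_pos (rel_trans hg h)]
  · rw [if_neg hg, if_neg (fun hgy => hg (rel_trans hgy (rel_symm h)))]

/-- inverse size of the `rel`-class of `x`. -/
noncomputable def ccard [Fintype G] (x : G) : ℂ :=
  ((Finset.univ.filter (fun y => rel y x)).card : ℂ)⁻¹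

open Finset in
lemma ccard_eq_of_rel {x y : G} (h : rel y x) : ccard y = ccard x := by
  unfold ccard
  have : (Finset.univ.filter (fun z => rel z y)) = (Finset.univ.filter (fun z => rel z x)) := by
    apply Finset.filter_congr
    intro z _
    exact ⟨fun hz => rel_trans hz h, fun hz => rel_trans hz (rel_symm h)⟩
  rw [this]

open Finset in
lemma ccard_mul_card {x : G} :
    ((univ.filter (fun y => rel y x)).card : ℂ) * ccard x = 1 := by
  have hne : (univ.filter (fun y => rel y x)).Nonempty := ⟨x, by simp [rel_refl]⟩
  have hcard : ((univ.filter (fun y => rel y x)).card : ℂ) ≠ 0 := by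
    exact_mod_cast (Finset.card_pos.mpr hne).ne'
  exact mul_inv_cancel₀ hcard

open Finset in
/-- expansion of a `rel`-class function in the `Phi` basis. -/
lemma phi_expand (f : G → ℂ) (hf : ∀ g h : G, rel g h → f g = f h) :
    f = ∑ x : G, (ccard x * f x) • Phi G x := by
  funext g
  rw [Finset.sum_apply]
  rw [← Finset.sum_filter_add_sum_filter_not univ (fun x => rel x g)]
  have h2 : ∀ x ∈ univ.filter (fun x => ¬ rel x g),
      ((ccard x * f x) • Phi G x) g = 0 := by
    intro x hx
    rw [Finset.mem_filter] at hx
    rw [Pi.smul_apply, Phi_apply_of_not_rel (fun h => hx.2 (rel_symm h)), smul_zero]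
  rw [Finset.sum_eq_zero h2, add_zero]
  have h1 : ∀ x ∈ univ.filter (fun x => rel x g),
      ((ccard x * f x) • Phi G x) g = ccard g * f g := by
    intro x hx
    rw [Finset.mem_filter] at hx
    rw [Pi.smul_apply, Phi_apply_of_rel (rel_symm hx.2), smul_eq_mul, mul_one,
      ccard_eq_of_rel hx.2, hf x g hx.2]
  rw [Finset.sum_congr rfl h1, Finset.sum_const, nsmul_eq_mul, ← mul_assoc,
    ccard_mul_card, one_mul]

lemma indTriv_rel_classfun (C : Subgroup G) : ∀ g h : G, rel g h →
    indTriv G C g = indTriv G C h := fun _ _ h => indTriv_rel_const C h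

open Finset in
lemma sum_class_smul {x : G} (v : G → ℂ) (hv : ∀ y, rel y x → v y = v x) :
    ∑ y ∈ univ.filter (fun y => rel y x), (ccard y * v y) • Phi G y = (v x) • Phi G x := by
  have : ∀ y ∈ univ.filter (fun y => rel y x), (ccard y * v y) • Phi G y
      = (ccard x * v x) • Phi G x := by
    intro y hy
    rw [Finset.mem_filter] at hy
    rw [ccard_eq_of_rel hy.2, hv y hy.2, Phi_eq_of_rel hy.2]
  rw [Finset.sum_congr rfl this, Finset.sum_const, ← Nat.cast_smul_eq_nsmul ℂ, smul_smul,
    ← mul_assoc, ccard_mul_card, one_mul]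

open Finset in
/-- Key positive lemma: if a family of subgroups covers all cyclic classes,
then every `Phi x` is in the span of their induced characters. -/
lemma phi_mem_span {ι : Type*} (D : ι → Subgroup G)
    (hcover : ∀ y : G, ∃ i, SubConj (zpowers y) (D i)) (x : G) :
    Phi G x ∈ Submodule.span ℂ (Set.range fun i => indTriv G (D i)) := by
  set S := Submodule.span ℂ (Set.range fun i => indTriv G (D i)) with hS
  suffices H : ∀ n : ℕ, ∀ x : G, Nat.card (zpowers x) = n → Phi G x ∈ S by exact H _ x rfl
  intro n
  induction n using Nat.strong_induction_on with
  | _ n IH =>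
    intro x hx
    obtain ⟨i, hi⟩ := hcover x
    have hDi : indTriv G (D i) = indTriv G (zpowers x) := indTriv_subConj_eq (subConj_symm hi)
    have hexp := phi_expand (indTriv G (zpowers x)) (indTriv_rel_classfun _)
    rw [← Finset.sum_filter_add_sum_filter_not univ (fun y => rel y x)] at hexp
    rw [sum_class_smul (indTriv G (zpowers x))
      (fun y hy => indTriv_rel_const _ hy)] at hexp
    have hrest : ∑ y ∈ univ.filter (fun y => ¬ rel y x),
        (ccard y * indTriv G (zpowers x) y) • Phi G y ∈ S := by
      apply Submodule.sum_mem
      intro y hy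
      rw [Finset.mem_filter] at hy
      by_cases hey : indTriv G (zpowers x) y = 0
      · rw [hey, mul_zero, zero_smul]; exact Submodule.zero_mem _
      · apply Submodule.smul_mem
        obtain ⟨u, hu⟩ := (indTriv_ne_zero_iff _ _).mp hey
        have hle : Nat.card (zpowers y) ≤ Nat.card (zpowers x) := card_le_of_conj_mem hu
        have hlt : Nat.card (zpowers y) < n := by
          rcases lt_or_eq_of_le hle with h | h
          · omega
          · exact absurd (subConj_of_conj_mem_card_eq hu (le_of_eq h.symm)) hy.2
        exact IH _ hlt y rfl
    have hex : indTriv G (zpowers x) ∈ S := by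
      rw [← hDi]; exact Submodule.subset_span ⟨i, rfl⟩
    have hne : indTriv G (zpowers x) x ≠ 0 := indTriv_self_ne_zero x
    have hA : (indTriv G (zpowers x) x) • Phi G x = indTriv G (zpowers x)
        - ∑ y ∈ univ.filter (fun y => ¬ rel y x),
          (ccard y * indTriv G (zpowers x) y) • Phi G y := eq_sub_of_add_eq hexp.symm
    have hphi : Phi G x
        = (indTriv G (zpowers x) x)⁻¹ • ((indTriv G (zpowers x) x) • Phi G x) := by
      rw [smul_smul, inv_mul_cancel₀ hne, one_smul]
    rw [hphi, hA]
    exact Submodule.smul_mem _ _ (Submodule.sub_mem _ hex hrest)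

lemma exists_zpowers_eq_of_isCyclic {H : Subgroup G} (h : IsCyclic ↥H) :
    ∃ d : G, zpowers d = H := by
  obtain ⟨⟨d, hd⟩, hgen⟩ := h.exists_generator
  refine ⟨d, le_antisymm (zpowers_le.mpr hd) ?_⟩
  intro x hx
  obtain ⟨k, hk⟩ := hgen ⟨x, hx⟩
  have : d ^ k = x := by
    have := congrArg (Subtype.val) hk
    simpa using this
  exact this ▸ zpow_mem (mem_zpowers d) k

open Finset in
/-- Negative lemma: if none of the subgroups `D i` (each cyclic) is conjugate to `zpowers x`,
then `Phi G x` is not a combination of the `indTriv G (D i)`. -/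
lemma phi_not_combination {n : ℕ} (D : Fin n → Subgroup G)
    (hgen : ∀ i, ∃ d : G, zpowers d = D i)
    (x : G) (hx : ∀ i, ¬ SubConj (zpowers x) (D i)) :
    ∀ s : Finset (Fin n), ∀ a : Fin n → ℂ, Phi G x ≠ ∑ i ∈ s, a i • indTriv G (D i) := by
  suffices H : ∀ m : ℕ, ∀ s : Finset (Fin n), s.card = m →
      ∀ a : Fin n → ℂ, Phi G x ≠ ∑ i ∈ s, a i • indTriv G (D i) by
    exact fun s a => H s.card s rfl a
  intro m
  induction m using Nat.strong_induction_on with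
  | _ m IH =>
  intro s hcard a hcontra
  rcases Finset.eq_empty_or_nonempty s with rfl | hs
  · rw [Finset.sum_empty] at hcontra
    have := congrFun hcontra x
    rw [Phi_apply_of_rel (rel_refl x)] at this
    simp at this
  · obtain ⟨j₀, hj₀s, hj₀max⟩ := Finset.exists_max_image s (fun i => Nat.card (D i)) hs
    obtain ⟨d, hd⟩ := hgen j₀
    -- evaluate at d
    have heval := congrFun hcontra d
    have hlhs : Phi G x d = 0 := by
      apply Phi_apply_of_not_rel
      intro hr
      exact hx j₀ (subConj_trans (rel_symm hr) (by rw [hd]; exact subConj_refl _))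
    rw [Finset.sum_apply] at heval
    set t := s.filter (fun i => SubConj (D j₀) (D i)) with ht
    have htsub : t ⊆ s := Finset.filter_subset _ _
    have hj₀t : j₀ ∈ t := Finset.mem_filter.mpr ⟨hj₀s, subConj_refl _⟩
    -- terms outside t vanish at d
    have hvanish : ∀ i ∈ s, i ∉ t → (a i • indTriv G (D i)) d = 0 := by
      intro i his hit
      rw [Pi.smul_apply, smul_eq_mul]
      rcases eq_or_ne (indTriv G (D i) d) 0 with h0 | h0
      · rw [h0, mul_zero]
      · exfalso
        obtain ⟨u, hu⟩ := (indTriv_ne_zero_iff _ _).mp h0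
        have hle : Nat.card (D i) ≤ Nat.card (zpowers d) := by
          rw [hd]; exact hj₀max i his
        have : SubConj (zpowers d) (D i) := subConj_of_conj_mem_card_eq hu hle
        rw [hd] at this
        exact hit (Finset.mem_filter.mpr ⟨his, this⟩)
    -- terms inside t all equal indTriv (D j₀)
    have hteq : ∀ i ∈ t, indTriv G (D i) = indTriv G (D j₀) := by
      intro i hit
      exact (indTriv_subConj_eq (Finset.mem_filter.mp hit).2).symm
    have hsplit : (0 : ℂ) = (∑ i ∈ t, a i) * indTriv G (D j₀) d := by
      rw [← hlhs, heval, ← Finset.sum_filter_add_sum_filter_not s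
        (fun i => SubConj (D j₀) (D i)) (fun i => (a i • indTriv G (D i)) d), ← ht]
      have h2 : ∑ i ∈ s.filter (fun i => ¬ SubConj (D j₀) (D i)),
          (a i • indTriv G (D i)) d = 0 := by
        apply Finset.sum_eq_zero
        intro i hi
        rw [Finset.mem_filter] at hi
        exact hvanish i hi.1 (fun hit => hi.2 (Finset.mem_filter.mp hit).2)
      rw [h2, add_zero, Finset.sum_mul]
      apply Finset.sum_congr rfl
      intro i hit
      rw [Pi.smul_apply, smul_eq_mul, hteq i hit]
    have hDj₀d : indTriv G (D j₀) d ≠ 0 := by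
      rw [← hd]; exact indTriv_self_ne_zero d
    have hsum0 : ∑ i ∈ t, a i = 0 := by
      rcases mul_eq_zero.mp hsplit.symm with h | h
      · exact h
      · exact absurd h hDj₀d
    -- now remove t from s
    have hnew : Phi G x = ∑ i ∈ s \ t, a i • indTriv G (D i) := by
      rw [hcontra, ← Finset.sum_sdiff htsub]
      have : ∑ i ∈ t, a i • indTriv G (D i) = 0 := by
        have : ∀ i ∈ t, a i • indTriv G (D i) = a i • indTriv G (D j₀) := by
          intro i hit; rw [hteq i hit]
        rw [Finset.sum_congr rfl this, ← Finset.sum_smul, hsum0, zero_smul]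
      rw [this, add_zero]
    have hlt : (s \ t).card < m := by
      rw [← hcard]
      exact Finset.card_lt_card (Finset.sdiff_ssubset htsub ⟨j₀, hj₀t⟩)
    exact IH _ hlt (s \ t) rfl a hnew

end Part0

section PartA
open Subgroup
attribute [local instance] Classical.propDecidable
set_option linter.unusedSectionVars false
variable {G : Type} [Group G] [Fintype G]

lemma card_numset_eq (C : Subgroup G) (g : G) :
    Nat.card {x : G // x⁻¹ * g * x ∈ C}
      = Nat.card C * Nat.card {q : G ⧸ C // g • q = q} := by
  have key : ∀ x : G, (x⁻¹ * g * x ∈ C)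
      ↔ (QuotientGroup.mk x : G ⧸ C) ∈ {q : G ⧸ C | g • q = q} := by
    intro x
    show x⁻¹ * g * x ∈ C ↔ (QuotientGroup.mk (g * x) : G ⧸ C) = QuotientGroup.mk x
    rw [QuotientGroup.eq]
    constructor
    · intro h
      have := inv_mem h
      rw [show (x⁻¹ * g * x)⁻¹ = (g*x)⁻¹ * x by group] at this
      exact this
    · intro h
      have := inv_mem h
      rw [show ((g*x)⁻¹ * x)⁻¹ = x⁻¹ * g * x by group] at this
      exact this
  have h1 : Nat.card {x : G // x⁻¹ * g * x ∈ C}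
      = Nat.card (QuotientGroup.mk ⁻¹' {q : G ⧸ C | g • q = q}) := by
    apply Nat.card_congr
    exact Equiv.subtypeEquiv (Equiv.refl G) (fun x => key x)
  rw [h1, Nat.card_congr (QuotientGroup.preimageMkEquivSubgroupProdSet C _), Nat.card_prod]
  rfl

/-- the permutation representation of `G` on `G ⧸ C`. -/
noncomputable def permRep (C : Subgroup G) : FDRep ℂ G :=
  have : FiniteDimensional ℂ ((G ⧸ C) →₀ ℂ) :=
    Module.Finite.equiv (Finsupp.linearEquivFunOnFinite ℂ ℂ (G ⧸ C)).symm
  FDRep.of (Representation.ofMulAction ℂ G (G ⧸ C))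

lemma indTriv_eq_card_fixed (C : Subgroup G) (g : G) :
    indTriv G C g = (Nat.card {q : G ⧸ C // g • q = q} : ℂ) := by
  unfold indTriv
  rw [card_numset_eq C g]
  push_cast
  rw [mul_comm, mul_div_assoc, div_self, mul_one]
  have : 0 < Nat.card C := Nat.card_pos
  exact_mod_cast this.ne'

lemma permRep_character (C : Subgroup G) (g : G) :
    (permRep C).character g = (Nat.card {q : G ⧸ C // g • q = q} : ℂ) := by
  unfold FDRep.character
  show LinearMap.trace ℂ (MonoidAlgebra ℂ (G ⧸ C)) (Representation.ofMulAction ℂ G (G ⧸ C) g) = _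
  rw [LinearMap.trace_eq_matrix_trace ℂ (MonoidAlgebra.basis (G ⧸ C) ℂ)]
  rw [Matrix.trace]
  have hdiag : ∀ q : G ⧸ C,
      (LinearMap.toMatrix (MonoidAlgebra.basis (G ⧸ C) ℂ) (MonoidAlgebra.basis (G ⧸ C) ℂ)
        (Representation.ofMulAction ℂ G (G ⧸ C) g)).diag q
          = if g • q = q then (1:ℂ) else 0 := by
    intro q
    rw [Matrix.diag_apply, LinearMap.toMatrix_apply, MonoidAlgebra.basis_apply]
    rw [Representation.ofMulAction_single]
    show (MonoidAlgebra.single (g • q) (1:ℂ)).coeff q = _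
    rw [MonoidAlgebra.coeff_single]
    rw [Finsupp.single_apply]
  rw [Finset.sum_congr rfl (fun q _ => hdiag q)]
  rw [Finset.sum_boole]
  congr 1
  rw [Nat.card_eq_fintype_card, Fintype.card_subtype]

lemma indTriv_isCharacter (C : Subgroup G) : IsCharacter G (indTriv G C) := by
  refine ⟨permRep C, ?_, ?_⟩
  · funext g
    rw [indTriv_eq_card_fixed, permRep_character]
  · intro h
    have h1 := congrFun h 1
    rw [indTriv_eq_card_fixed, Pi.zero_apply] at h1
    have h2 : Nat.card {q : G ⧸ C // (1:G) • q = q} ≠ 0 := by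
      have : Nonempty {q : G ⧸ C // (1:G) • q = q} := ⟨⟨QuotientGroup.mk 1, one_smul _ _⟩⟩
      exact Nat.card_pos.ne'
    exact h2 (by exact_mod_cast h1)

lemma indTriv_isRatValued (C : Subgroup G) : IsRatValued (indTriv G C) := by
  intro g
  exact ⟨(Nat.card {q : G ⧸ C // g • q = q} : ℚ), by rw [indTriv_eq_card_fixed]; push_cast; rfl⟩

end PartA

section PartB
open Finset
/-- geometric sum of a root of unity in a ring: `S * S = n • S`. -/
lemma geom_sq {R : Type*} [Ring R] {B : R} {n : ℕ} (hB : B ^ n = 1) :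
    (∑ m ∈ range n, B ^ m) * (∑ m ∈ range n, B ^ m) = n • (∑ m ∈ range n, B ^ m) := by
  set S := ∑ m ∈ range n, B ^ m with hS
  have hBS : B * S = S := by
    rw [hS, Finset.mul_sum]
    have h1 : ∀ m ∈ range n, B * B ^ m = B ^ (m+1) := by
      intro m _; rw [pow_succ']
    rw [Finset.sum_congr rfl h1]
    have h2 : ∑ m ∈ range (n+1), B ^ m = ∑ m ∈ range n, B ^ (m+1) + B ^ 0 :=
      Finset.sum_range_succ' _ n
    have h3 : ∑ m ∈ range (n+1), B ^ m = ∑ m ∈ range n, B ^ m + B ^ n :=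
      Finset.sum_range_succ _ n
    rw [hB] at h3
    rw [pow_zero] at h2
    have := h2.symm.trans h3
    -- ∑ B^(m+1) + 1 = S + 1
    exact add_right_cancel this
  have hpow : ∀ m : ℕ, B ^ m * S = S := by
    intro m
    induction m with
    | zero => rw [pow_zero, one_mul]
    | succ k ih => rw [pow_succ, mul_assoc, hBS, ih]
  calc S * S = ∑ m ∈ range n, B ^ m * S := by rw [hS, Finset.sum_mul]
  _ = ∑ _m ∈ range n, S := Finset.sum_congr rfl (fun m _ => hpow m)
  _ = n • S := by rw [Finset.sum_const, card_range]

/-- The averaged operator is idempotent, hence has natural-number trace. -/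
lemma trace_avg_natural {E : Type*} [AddCommGroup E] [Module ℂ E] [FiniteDimensional ℂ E]
    (A : Module.End ℂ E) {n : ℕ} (hn : 0 < n) (hA : A ^ n = 1) (u : ℂ) (hu : u ^ n = 1) :
    ∃ N : ℕ, LinearMap.trace ℂ E ((n : ℂ)⁻¹ • ∑ m ∈ range n, u ^ m • A ^ m) = (N : ℂ) := by
  set B : Module.End ℂ E := u • A with hB
  have hBn : B ^ n = 1 := by
    rw [hB, smul_pow, hA, hu, one_smul]
  have hsum : ∑ m ∈ range n, u ^ m • A ^ m = ∑ m ∈ range n, B ^ m := by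
    apply Finset.sum_congr rfl
    intro m _
    rw [hB, smul_pow]
  rw [hsum]
  set π : Module.End ℂ E := (n : ℂ)⁻¹ • ∑ m ∈ range n, B ^ m with hπ
  have hnc : (n : ℂ) ≠ 0 := by exact_mod_cast hn.ne'
  have hidem : π ∘ₗ π = π := by
    show π * π = π
    rw [hπ, smul_mul_smul_comm, geom_sq hBn, ← Nat.cast_smul_eq_nsmul ℂ, smul_smul]
    congr 1
    field_simp
  obtain ⟨p, hp⟩ := (LinearMap.isProj_iff_isIdempotentElem π).mpr hidem
  exact ⟨Module.finrank ℂ p, hp.trace⟩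

open Polynomial in
lemma char_pow_eq {G : Type} [Group G] [Fintype G] (V : FDRep ℂ G) (g : G)
    (hrat : ∀ m : ℕ, ∃ q : ℚ, V.character (g ^ m) = (q : ℂ))
    (k : ℕ) (hk : Nat.Coprime k (orderOf g)) :
    V.character (g ^ k) = V.character g := by
  set n := orderOf g with hn'
  have hn : 0 < n := orderOf_pos g
  have hnc : (n : ℂ) ≠ 0 := by exact_mod_cast hn.ne'
  set ζ : ℂ := Complex.exp (2 * Real.pi * Complex.I / n) with hζ'
  have hζ : IsPrimitiveRoot ζ n := Complex.isPrimitiveRoot_exp n hn.ne'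
  have hζne : ζ ≠ 0 := hζ.ne_zero hn.ne'
  set A : Module.End ℂ V := V.ρ g with hA'
  have hA : A ^ n = 1 := by
    rw [hA', ← map_pow, hn', pow_orderOf_eq_one, map_one]
  have hchar : ∀ m : ℕ, V.character (g ^ m) = LinearMap.trace ℂ V (A ^ m) := by
    intro m
    rw [hA', ← map_pow]
    rfl
  set t : ℕ → ℂ := fun j => (n:ℂ)⁻¹ * ∑ m ∈ range n, ((ζ ^ j)⁻¹) ^ m * V.character (g ^ m)
    with ht'
  -- each t j is a natural number
  have fact1 : ∀ j : ℕ, ∃ N : ℕ, t j = (N : ℂ) := by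
    intro j
    have hu : ((ζ ^ j)⁻¹) ^ n = 1 := by
      rw [inv_pow, ← pow_mul, mul_comm j n, pow_mul, hζ.pow_eq_one, one_pow, inv_one]
    obtain ⟨N, hN⟩ := trace_avg_natural A hn hA ((ζ ^ j)⁻¹) hu
    refine ⟨N, ?_⟩
    rw [← hN, map_smul, map_sum, smul_eq_mul]
    show (n:ℂ)⁻¹ * ∑ m ∈ range n, ((ζ ^ j)⁻¹) ^ m * V.character (g ^ m) = _
    congr 1
    apply Finset.sum_congr rfl
    intro m _
    rw [map_smul, smul_eq_mul, hchar m]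
  -- Fourier inversion
  have fact2 : ∀ l : ℕ, ∑ j ∈ range n, t j * (ζ ^ j) ^ l = V.character (g ^ l) := by
    intro l
    have hcomb : ∀ j m : ℕ, ((ζ ^ j)⁻¹) ^ m * (ζ ^ j) ^ l
        = (ζ ^ ((l:ℤ) - (m:ℤ))) ^ j := by
      intro j m
      have h1 : ((ζ ^ j)⁻¹) ^ m * (ζ ^ j) ^ l = (ζ ^ j) ^ ((l:ℤ) - (m:ℤ)) := by
        rw [inv_pow, ← zpow_natCast (ζ ^ j) m, ← zpow_natCast (ζ ^ j) l, ← zpow_neg,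
          ← zpow_add₀ (pow_ne_zero j hζne)]
        congr 1
        ring
      rw [h1, ← zpow_natCast ζ j, ← zpow_mul]
      rw [← zpow_natCast (ζ ^ ((l:ℤ) - (m:ℤ))) j, ← zpow_mul]
      congr 1
      ring
    have e1 : ∀ j ∈ range n, t j * (ζ ^ j) ^ l
        = ∑ m ∈ range n, (n:ℂ)⁻¹ * (V.character (g ^ m) * (ζ ^ ((l:ℤ) - (m:ℤ))) ^ j) := by
      intro j _
      show ((n:ℂ)⁻¹ * ∑ m ∈ range n, ((ζ ^ j)⁻¹) ^ m * V.character (g ^ m)) * (ζ ^ j) ^ l = _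
      rw [Finset.mul_sum, Finset.sum_mul]
      apply Finset.sum_congr rfl
      intro m _
      rw [show (n:ℂ)⁻¹ * (((ζ ^ j)⁻¹) ^ m * V.character (g ^ m)) * (ζ ^ j) ^ l
          = (n:ℂ)⁻¹ * (V.character (g ^ m) * (((ζ ^ j)⁻¹) ^ m * (ζ ^ j) ^ l)) from by ring,
        hcomb j m]
    rw [Finset.sum_congr rfl e1, Finset.sum_comm]
    have hgeom : ∀ m ∈ range n, ∑ j ∈ range n, (ζ ^ ((l:ℤ) - (m:ℤ))) ^ j
        = if m = l % n then (n:ℂ) else 0 := by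
      intro m hm
      rw [Finset.mem_range] at hm
      have hmod : (l:ℤ) % n = ((l % n : ℕ) : ℤ) := by push_cast; rfl
      by_cases hdvd : (n:ℤ) ∣ ((l:ℤ) - (m:ℤ))
      · have h1 : ζ ^ ((l:ℤ) - (m:ℤ)) = 1 := (hζ.zpow_eq_one_iff_dvd _).mpr hdvd
        have hm' : m = l % n := by
          have h2 : (l:ℤ) % n = (m:ℤ) % n :=
            Int.emod_eq_emod_iff_emod_sub_eq_zero.mpr (Int.emod_eq_zero_of_dvd hdvd)
          have h3 : (m:ℤ) % n = m := Int.emod_eq_of_lt (by positivity) (by exact_mod_cast hm)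
          omega
        rw [if_pos hm', h1]
        simp
      · have h1 : ζ ^ ((l:ℤ) - (m:ℤ)) ≠ 1 := fun h => hdvd ((hζ.zpow_eq_one_iff_dvd _).mp h)
        have hm' : m ≠ l % n := by
          intro h
          apply hdvd
          subst h
          have h5 : (l:ℤ) % n = (l:ℤ) - n * ((l:ℤ) / n) := by
            rw [Int.emod_def]
          refine ⟨(l:ℤ) / n, ?_⟩
          omega
        rw [if_neg hm', geom_sum_eq h1]
        have hwn : (ζ ^ ((l:ℤ) - (m:ℤ))) ^ n = 1 := by
          rw [← zpow_natCast (ζ ^ ((l:ℤ) - (m:ℤ))) n, ← zpow_mul, mul_comm, zpow_mul,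
            zpow_natCast, hζ.pow_eq_one, one_zpow]
        rw [hwn, sub_self, zero_div]
    have e2 : ∀ m ∈ range n, ∑ j ∈ range n, (n:ℂ)⁻¹
        * (V.character (g ^ m) * (ζ ^ ((l:ℤ) - (m:ℤ))) ^ j )
        = if m = l % n then V.character (g ^ m) else 0 := by
      intro m hm
      rw [← Finset.mul_sum, ← Finset.mul_sum, hgeom m hm]
      by_cases h : m = l % n
      · rw [if_pos h, if_pos h]
        rw [mul_comm, mul_assoc, mul_inv_cancel₀ hnc, mul_one]
      · rw [if_neg h, if_neg h, mul_zero, mul_zero]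
    rw [Finset.sum_congr rfl e2, Finset.sum_ite_eq' (range n) (l % n)
      (fun m => V.character (g ^ m))]
    rw [if_pos (Finset.mem_range.mpr (Nat.mod_lt l hn))]
    rw [hn', pow_mod_orderOf]
  -- the polynomial with rational (natural) coefficients
  choose N hN using fact1
  set P : Polynomial ℚ := ∑ j ∈ range n, Polynomial.C ((N j : ℚ)) * Polynomial.X ^ j with hP'
  have haeval : ∀ z : ℂ, Polynomial.aeval z P = ∑ j ∈ range n, t j * z ^ j := by
    intro z
    rw [hP', map_sum]
    apply Finset.sum_congr rfl
    intro j _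
    rw [map_mul, map_pow, Polynomial.aeval_C, Polynomial.aeval_X, hN j]
    push_cast
    rfl
  obtain ⟨q₀, hq₀⟩ := hrat 1
  rw [pow_one] at hq₀
  have hP1 : Polynomial.aeval ζ (P - Polynomial.C q₀) = 0 := by
    rw [map_sub, Polynomial.aeval_C, haeval ζ]
    have : ∑ j ∈ range n, t j * ζ ^ j = V.character g := by
      have := fact2 1
      rw [pow_one] at this
      rw [← this]
      apply Finset.sum_congr rfl
      intro j _
      rw [pow_one]
    rw [this, hq₀]
    have : (algebraMap ℚ ℂ) q₀ = (q₀ : ℂ) := by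
      simp [eq_ratCast]
    rw [this, sub_self]
  have hdvd : minpoly ℚ ζ ∣ P - Polynomial.C q₀ := minpoly.dvd ℚ ζ hP1
  have hcyc : Polynomial.cyclotomic n ℚ = minpoly ℚ ζ :=
    Polynomial.cyclotomic_eq_minpoly_rat hζ hn
  have hζk : IsPrimitiveRoot (ζ ^ k) n := hζ.pow_of_coprime k hk
  have hzero : Polynomial.aeval (ζ ^ k) (minpoly ℚ ζ) = 0 := by
    rw [← hcyc]
    have h1 : Polynomial.aeval (ζ ^ k) (Polynomial.cyclotomic n ℚ)
        = Polynomial.eval (ζ ^ k) (Polynomial.cyclotomic n ℂ) := by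
      rw [← Polynomial.map_cyclotomic n (algebraMap ℚ ℂ), Polynomial.aeval_def,
        Polynomial.eval_map]
    rw [h1]
    exact hζk.isRoot_cyclotomic hn
  have hPk : Polynomial.aeval (ζ ^ k) (P - Polynomial.C q₀) = 0 := by
    obtain ⟨R, hR⟩ := hdvd
    rw [hR, map_mul, hzero, zero_mul]
  rw [map_sub, Polynomial.aeval_C, haeval (ζ ^ k), sub_eq_zero] at hPk
  have hfin : ∑ j ∈ range n, t j * (ζ ^ k) ^ j = V.character (g ^ k) := by
    rw [← fact2 k]
    apply Finset.sum_congr rfl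
    intro j _
    rw [← pow_mul, ← pow_mul, mul_comm j k]
  rw [hfin] at hPk
  rw [hPk, hq₀]
  simp [eq_ratCast]

open Subgroup in
lemma char_rel_const {G : Type} [Group G] [Fintype G] (V : FDRep ℂ G)
    (hrat : ∀ x : G, ∃ q : ℚ, V.character x = (q : ℂ)) {g h : G}
    (hr : SubConj (zpowers g) (zpowers h)) : V.character g = V.character h := by
  obtain ⟨a, ha⟩ := hr
  rw [MonoidHom.map_zpowers] at ha
  have hconj : V.character ((MulAut.conj a) g) = V.character g := by
    show V.character (a * g * a⁻¹) = V.character g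
    exact FDRep.char_conj V g a
  rw [← hconj]
  -- now zpowers ((MulAut.conj a) g) = zpowers h
  set x := (MulAut.conj a) g with hx
  have hzp : zpowers x = zpowers h := ha
  -- h = x ^ k
  have hmem : h ∈ Submonoid.powers x := by
    rw [mem_powers_iff_mem_zpowers, hzp]
    exact mem_zpowers h
  obtain ⟨k, hk'⟩ := hmem
  have hk : x ^ k = h := hk'
  have hord : orderOf x = orderOf h := by
    rw [← Nat.card_zpowers, ← Nat.card_zpowers, hzp]
  have hcop : Nat.Coprime k (orderOf x) := by
    have h1 : orderOf (x ^ k) = orderOf x / Nat.gcd (orderOf x) k := orderOf_pow x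
    rw [hk, ← hord] at h1
    have h2 : 0 < orderOf x := orderOf_pos x
    have h3 : orderOf x / Nat.gcd (orderOf x) k = orderOf x := h1.symm
    have h4 : Nat.gcd (orderOf x) k = 1 := by
      rcases (Nat.div_eq_self.mp h3) with h | h
      · omega
      · exact h
    exact Nat.coprime_comm.mp h4
  rw [show h = x ^ k from hk.symm]
  exact (char_pow_eq V x (fun m => hrat (x ^ m)) k hcop).symm


lemma isCyclic_zpowers {G : Type} [Group G] (g : G) : IsCyclic ↥(Subgroup.zpowers g) := by
  refine ⟨⟨⟨g, Subgroup.mem_zpowers g⟩, fun x => ?_⟩⟩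
  obtain ⟨k, hk⟩ := Subgroup.mem_zpowers_iff.mp x.2
  exact Subgroup.mem_zpowers_iff.mpr ⟨k, Subtype.ext (by simpa using hk)⟩
end PartB

theorem stmt1 (G : Type) [Group G] [Fintype G] (n : ℕ) (C : Fin n → Subgroup G)
    (hC : ∀ i, IsCyclic ↥(C i)) :
    Submodule.span ℂ (Set.range fun i => indTriv G (C i)) = ratCharSpan G ↔
      ∀ H : Subgroup G, IsCyclic ↥H → ∃ i, SubConj H (C i) := by
  constructor
  · intro hspan H hcyc
    obtain ⟨x, hx⟩ := exists_zpowers_eq_of_isCyclic hcyc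
    by_contra hcon
    push_neg at hcon
    have hx' : ∀ i, ¬ SubConj (Subgroup.zpowers x) (C i) := by
      intro i h
      rw [hx] at h
      exact (hcon i) h
    have h1 : Phi G x ∈ ratCharSpan G := by
      have h2 := phi_mem_span (fun g : G => Subgroup.zpowers g)
        (fun y => ⟨y, subConj_refl _⟩) x
      refine Submodule.span_le.mpr ?_ h2
      rintro _ ⟨g, rfl⟩
      exact Submodule.subset_span ⟨indTriv_isCharacter _, indTriv_isRatValued _⟩
    rw [← hspan] at h1
    obtain ⟨a, ha⟩ := (Submodule.mem_span_range_iff_exists_fun ℂ).mp h1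
    refine phi_not_combination C (fun i => exists_zpowers_eq_of_isCyclic (hC i)) x hx'
      Finset.univ a ?_
    rw [← ha]
  · intro hcov
    apply le_antisymm
    · rw [Submodule.span_le]
      rintro _ ⟨i, rfl⟩
      exact Submodule.subset_span ⟨indTriv_isCharacter _, indTriv_isRatValued _⟩
    · rw [ratCharSpan, Submodule.span_le]
      rintro χ ⟨⟨V, hV, hne⟩, hratv⟩
      have hconst : ∀ g h : G, rel g h → χ g = χ h := by
        intro g h hr
        rw [hV]
        exact char_rel_const V (fun y => by rw [← hV]; exact hratv y) hr
      rw [phi_expand χ hconst]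
      apply Submodule.sum_mem
      intro x _
      apply Submodule.smul_mem
      exact phi_mem_span C (fun y => hcov (Subgroup.zpowers y) (isCyclic_zpowers y)) x
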